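/- The Kolmogorov complexity function K : ℕ → ℕ, assigning to each x the least e such that (Code.ofNatCode e).eval 0 = Part.some x, is not computable. -/

import Mathlib

open scoped Classical
open Nat.Partrec Nat.Partrec.Code

theorem K_exists (x : ℕ) : ∃ e : ℕ, (Code.ofNatCode e).eval 0 = Part.some x :=
  ⟨Code.encodeCode (Code.const x), by
    rw [← Code.encodeCode_eq, ← Code.ofNatCode_eq, Denumerable.ofNat_encode]
    exact Code.eval_const x 0⟩

/-- Kolmogorov complexity: the least index `e` such that program `e` on input `0` outputs `x`. -/
noncomputable def K (x : ℕ) : ℕ := Nat.find (K_exists x)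

theorem K_injective : Function.Injective K := by
  intro x y h
  have hx : (Code.ofNatCode (K x)).eval 0 = Part.some x := Nat.find_spec (K_exists x)
  have hy : (Code.ofNatCode (K y)).eval 0 = Part.some y := Nat.find_spec (K_exists y)
  rw [h, hy] at hx
  exact (Part.some_inj.mp hx).symm

theorem K_unbounded (n : ℕ) : ∃ x, n < K x := by
  by_contra h
  push_neg at h
  obtain ⟨a, _, b, _, hab, he⟩ := Finset.exists_ne_map_eq_of_card_lt_of_maps_to
    (s := Finset.range (n + 2)) (t := Finset.range (n + 1)) (by simp) (f := K)
    (fun x _ => Finset.mem_range.mpr ((h x).trans_lt (Nat.lt_succ_self n)))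
  exact hab (K_injective he)

theorem K_not_computable : ¬ Computable K := by
  intro hK
  -- g c = least x with encode c < K x
  let g : Code → ℕ := fun c => Nat.find (K_unbounded (Encodable.encode c))
  have hg : Computable g := by
    have hp : Computable₂ fun (c : Code) (x : ℕ) => decide (Encodable.encode c < K x) :=
      (Primrec.nat_lt.decide.to_comp).comp (Computable.encode.comp Computable.fst)
        (hK.comp Computable.snd)
    have hr : Partrec fun c : Code =>
        Nat.rfind fun x => Part.some (decide (Encodable.encode c < K x)) :=
      Partrec.rfind (Partrec.of_eq (Computable.partrec hp) fun _ => rfl).to₂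
    refine (Partrec.of_eq hr fun c => ?_ : Partrec _)
    have hmem : g c ∈ Nat.rfind fun x => Part.some (decide (Encodable.encode c < K x)) := by
      refine Nat.mem_rfind.mpr ?_
      constructor
      · simpa using Nat.find_spec (K_unbounded (Encodable.encode c))
      · intro m hm
        simpa using Nat.find_min (K_unbounded (Encodable.encode c)) hm
    exact Part.eq_some_iff.2 hmem
  have hf : Partrec₂ fun (c : Code) (_ : ℕ) => (Part.some (g c) : Part ℕ) :=
    Partrec.to₂ ((hg.comp Computable.fst).partrec)
  obtain ⟨c, hc⟩ := Nat.Partrec.Code.fixed_point₂ hf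
  have heval : (Code.ofNatCode (Encodable.encode c)).eval 0 = Part.some (g c) := by
    rw [← Code.ofNatCode_eq, Denumerable.ofNat_encode, hc]
  have h1 : K (g c) ≤ Encodable.encode c := Nat.find_min' (K_exists (g c)) heval
  have h2 : Encodable.encode c < K (g c) := Nat.find_spec (K_unbounded (Encodable.encode c))
  exact absurd h1 (not_le.mpr h2)
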